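/- Let G be a locally nilpotent group, π a finite set of primes, and n the product of the primes in π. Assume that a π-subgroup H of G'Gⁿ is an Inn-basis of G, where G' is the derived subgroup and Gⁿ is the subgroup generated by all n-th powers. If either G is hypercentral or H is finite, then G is abelian. -/

import Mathlib

universe u

theorem Subgroup.normal_iSup_of_normal {G : Type u} [Group G] {ι : Sort*}
    (f : ι → Subgroup G) (h : ∀ i, (f i).Normal) : (⨆ i, f i).Normal := by
  constructor
  intro x hx g
  refine Subgroup.iSup_induction (C := fun y => g * y * g⁻¹ ∈ ⨆ i, f i) f hx
    (fun i y hy => le_iSup f i ((h i).conj_mem y hy g)) (by simpa using Subgroup.one_mem _) ?_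
  intro a b ha hb
  have hab : g * (a * b) * g⁻¹ = (g * a * g⁻¹) * (g * b * g⁻¹) := by group
  rw [hab]; exact mul_mem ha hb

/-- The transfinite upper central series of a group, as ordinal-indexed normal subgroups. -/
noncomputable def transUpperCentralSeriesAux (G : Type u) [Group G] :
    Ordinal.{u} → {H : Subgroup G // H.Normal} := fun o =>
  Ordinal.limitRecOn o
    ⟨⊥, inferInstance⟩
    (fun _ Z => ⟨@Subgroup.upperCentralSeriesStep G _ Z.1 Z.2, by
      haveI := Z.2; rw [Subgroup.upperCentralSeriesStep_eq_comap_center]; infer_instance⟩)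
    (fun o _ ih => ⟨⨆ (o' : Ordinal.{u}) (ho' : o' < o), (ih o' ho').1,
      Subgroup.normal_iSup_of_normal _ fun o' =>
        Subgroup.normal_iSup_of_normal _ fun ho' => (ih o' ho').2⟩)

/-- The transfinite upper central series. -/
noncomputable def transUpperCentralSeries (G : Type u) [Group G] (o : Ordinal.{u}) :
    Subgroup G := (transUpperCentralSeriesAux G o).1

/-- The hypercentre of a group: the union of the transfinite upper central series. -/
noncomputable def hypercenter (G : Type u) [Group G] : Subgroup G :=
  ⨆ o : Ordinal.{u}, transUpperCentralSeries G o

/-- A group is hypercentral if it equals the union of its transfinite upper central series. -/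
def IsHypercentral (G : Type u) [Group G] : Prop := hypercenter G = ⊤

/-- The hypercentral length: the least ordinal `o` with `Z_o(G) = G`. -/
noncomputable def hypercentralLength (G : Type u) [Group G] : Ordinal.{u} :=
  sInf {o : Ordinal.{u} | transUpperCentralSeries G o = ⊤}

/-- A group is locally nilpotent if every finitely generated subgroup is nilpotent. -/
def IsLocallyNilpotent (G : Type*) [Group G] : Prop :=
  ∀ S : Subgroup G, S.FG → Group.IsNilpotent S

/-! ### Auxiliary material -/

open scoped commutatorElement

section PiTors

variable {Γ : Type*} [Group Γ] {π : Finset ℕ}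

/-- `x` is a torsion element whose order only involves primes from `π`. -/
def PiT (π : Finset ℕ) {Γ : Type*} [Group Γ] (x : Γ) : Prop :=
  orderOf x ≠ 0 ∧ ∀ p : ℕ, p.Prime → p ∣ orderOf x → p ∈ π

lemma piT_one : PiT π (1 : Γ) := by
  refine ⟨by simp, ?_⟩
  intro p hp hd
  rw [orderOf_one] at hd
  exact absurd (Nat.eq_one_of_dvd_one hd) hp.ne_one

lemma piT_of_pow_eq_one {x : Γ} {m : ℕ} (hm : m ≠ 0)
    (hπm : ∀ p : ℕ, p.Prime → p ∣ m → p ∈ π) (h : x ^ m = 1) : PiT π x := by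
  have hd : orderOf x ∣ m := orderOf_dvd_of_pow_eq_one h
  constructor
  · rintro h0
    rw [h0] at hd
    exact hm (Nat.eq_zero_of_zero_dvd hd)
  · exact fun p hp hpd => hπm p hp (hpd.trans hd)

lemma PiT.inv {x : Γ} (h : PiT π x) : PiT π x⁻¹ := by
  refine ⟨by simpa [orderOf_inv] using h.1, ?_⟩
  simpa [orderOf_inv] using h.2

lemma PiT.mul {x y : Γ} (hc : Commute x y) (hx : PiT π x) (hy : PiT π y) :
    PiT π (x * y) := by
  apply piT_of_pow_eq_one (m := orderOf x * orderOf y) (mul_ne_zero hx.1 hy.1)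
  · intro p hp hd
    rcases (Nat.Prime.dvd_mul hp).mp hd with h | h
    · exact hx.2 p hp h
    · exact hy.2 p hp h
  · rw [hc.mul_pow]
    rw [pow_mul, pow_orderOf_eq_one, one_pow, mul_comm (orderOf x), pow_mul,
      pow_orderOf_eq_one, one_pow, one_mul]

lemma piT_map {Δ : Type*} [Group Δ] (f : Γ →* Δ) {x : Γ} (hx : PiT π x) :
    PiT π (f x) := by
  have hd : orderOf (f x) ∣ orderOf x := orderOf_map_dvd f x
  constructor
  · intro h0
    rw [h0] at hd
    exact hx.1 (Nat.eq_zero_of_zero_dvd hd)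
  · exact fun p hp hpd => hx.2 p hp (hpd.trans hd)

end PiTors

section CommCentral

variable {Γ : Type*} [Group Γ]

lemma conj_eq_comm_mul (k y : Γ) : k * y * k⁻¹ = ⁅k, y⁆ * y := by
  rw [commutatorElement_def]; group

variable {k : Γ} (hk : ∀ y : Γ, ⁅k, y⁆ ∈ Subgroup.center Γ)
include hk

lemma cc_mul (y z : Γ) : ⁅k, y * z⁆ = ⁅k, y⁆ * ⁅k, z⁆ := by
  have e : ⁅k, y * z⁆ * (y * z) = ⁅k, y⁆ * ⁅k, z⁆ * (y * z) := by
    calc ⁅k, y * z⁆ * (y * z) = k * (y * z) * k⁻¹ := (conj_eq_comm_mul _ _).symm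
    _ = (k * y * k⁻¹) * (k * z * k⁻¹) := by group
    _ = (⁅k, y⁆ * y) * (⁅k, z⁆ * z) := by rw [conj_eq_comm_mul k y, conj_eq_comm_mul k z]
    _ = ⁅k, y⁆ * (y * ⁅k, z⁆) * z := by group
    _ = ⁅k, y⁆ * (⁅k, z⁆ * y) * z := by rw [Subgroup.mem_center_iff.mp (hk z) y]
    _ = ⁅k, y⁆ * ⁅k, z⁆ * (y * z) := by group
  exact mul_right_cancel e

lemma cc_pow (y : Γ) : ∀ m : ℕ, ⁅k, y ^ m⁆ = ⁅k, y⁆ ^ m := by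
  intro m
  induction m with
  | zero => simp [commutatorElement_one_right]
  | succ m ih => rw [pow_succ, cc_mul hk, ih, pow_succ]

lemma cc_pow_left (y : Γ) : ∀ m : ℕ, ⁅k ^ m, y⁆ = ⁅k, y⁆ ^ m := by
  intro m
  induction m with
  | zero => simp [commutatorElement_one_left]
  | succ m ih =>
      have e : ⁅k ^ (m + 1), y⁆ * y = ⁅k, y⁆ ^ (m + 1) * y := by
        calc ⁅k ^ (m + 1), y⁆ * y = k ^ (m + 1) * y * (k ^ (m + 1))⁻¹ :=
              (conj_eq_comm_mul _ _).symm
        _ = k ^ m * (k * y * k⁻¹) * (k ^ m)⁻¹ := by rw [pow_succ]; group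
        _ = k ^ m * (⁅k, y⁆ * y) * (k ^ m)⁻¹ := by rw [conj_eq_comm_mul k y]
        _ = k ^ m * ⁅k, y⁆ * y * (k ^ m)⁻¹ := by group
        _ = ⁅k, y⁆ * k ^ m * y * (k ^ m)⁻¹ := by
              rw [Subgroup.mem_center_iff.mp (hk y) (k ^ m)]
        _ = ⁅k, y⁆ * (k ^ m * y * (k ^ m)⁻¹) := by group
        _ = ⁅k, y⁆ * (⁅k ^ m, y⁆ * y) := by rw [conj_eq_comm_mul (k ^ m) y]
        _ = ⁅k, y⁆ * ⁅k, y⁆ ^ m * y := by rw [ih]; group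
        _ = ⁅k, y⁆ ^ (m + 1) * y := by rw [pow_succ']
      exact mul_right_cancel e

lemma cc_inv (y : Γ) : ⁅k, y⁻¹⁆ = ⁅k, y⁆⁻¹ := by
  have h := cc_mul hk y y⁻¹
  rw [mul_inv_cancel, commutatorElement_one_right] at h
  exact (inv_eq_of_mul_eq_one_right h.symm).symm

lemma cc_commutator (a b : Γ) : ⁅k, ⁅a, b⁆⁆ = 1 := by
  rw [commutatorElement_def a b, cc_mul hk, cc_mul hk, cc_mul hk, cc_inv hk, cc_inv hk]
  rw [← commutatorElement_def, commutatorElement_eq_one_iff_mul_comm]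
  exact Subgroup.mem_center_iff.mp (hk b) _

end CommCentral
section Torsion

variable {π : Finset ℕ}

open Subgroup

lemma lcs_succ_eq {Γ : Type*} [Group Γ] (n : ℕ) :
    Subgroup.lowerCentralSeries (⊤ : Subgroup Γ) (n + 1) = ⁅Subgroup.lowerCentralSeries (⊤ : Subgroup Γ) n, ⊤⁆ := rfl

lemma central_closure_piT {Γ : Type*} [Group Γ] {S : Set Γ}
    (hc : ∀ s ∈ S, s ∈ Subgroup.center Γ) (ht : ∀ s ∈ S, PiT π s) :
    ∀ x ∈ Subgroup.closure S, PiT π x := by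
  intro x hx
  induction hx using Subgroup.closure_induction with
  | mem s hs => exact ht s hs
  | one => exact piT_one
  | mul a b ha hb pa pb =>
      have hcen : a ∈ Subgroup.center Γ := (Subgroup.closure_le _).mpr hc ha
      exact PiT.mul ((Subgroup.mem_center_iff.mp hcen b).symm) pa pb
  | inv a ha pa => exact pa.inv

lemma lcs_le_map_of_surjective {Γ Δ : Type*} [Group Γ] [Group Δ] (f : Γ →* Δ)
    (hf : Function.Surjective f) :
    ∀ c, Subgroup.lowerCentralSeries (⊤ : Subgroup Δ) c ≤ Subgroup.map f (Subgroup.lowerCentralSeries (⊤ : Subgroup Γ) c) := by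
  intro c
  induction c with
  | zero =>
      rw [Subgroup.lowerCentralSeries_zero, Subgroup.lowerCentralSeries_zero, Subgroup.map_top_of_surjective f hf]
  | succ c ih =>
      rw [lcs_succ_eq, Subgroup.commutator_le]
      intro g₁ hg₁ g₂ _
      obtain ⟨x, hx, rfl⟩ := ih hg₁
      obtain ⟨y, rfl⟩ := hf g₂
      rw [← map_commutatorElement]
      apply Subgroup.mem_map_of_mem
      rw [lcs_succ_eq]
      exact Subgroup.commutator_mem_commutator hx (Subgroup.mem_top y)

/-- In a nilpotent group generated by `π`-torsion elements, every element is `π`-torsion. -/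
lemma nilpotent_gen_piT :
    ∀ (c : ℕ) (Γ : Type u) (_ : Group Γ), Subgroup.lowerCentralSeries (⊤ : Subgroup Γ) c = ⊥ →
      ∀ (S : Set Γ), (∀ s ∈ S, PiT π s) → Subgroup.closure S = ⊤ →
        ∀ x : Γ, PiT π x := by
  intro c
  induction c with
  | zero =>
      intro Γ _ hc S _ _ x
      have : x ∈ Subgroup.lowerCentralSeries (⊤ : Subgroup Γ) 0 := by rw [Subgroup.lowerCentralSeries_zero]; trivial
      rw [hc, Subgroup.mem_bot] at this
      rw [this]; exact piT_one
  | succ c ih =>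
      intro Γ _ hc S hS htop x
      -- the last nontrivial term is central
      have hAc : ∀ a ∈ Subgroup.lowerCentralSeries (⊤ : Subgroup Γ) c, a ∈ Subgroup.center Γ := by
        intro a ha
        rw [Subgroup.mem_center_iff]
        intro g
        have h1 : ⁅a, g⁆ ∈ Subgroup.lowerCentralSeries (⊤ : Subgroup Γ) (c + 1) := by
          rw [lcs_succ_eq]
          exact Subgroup.commutator_mem_commutator ha (Subgroup.mem_top g)
        rw [hc, Subgroup.mem_bot, commutatorElement_eq_one_iff_mul_comm] at h1
        exact h1.symm
      cases c with
      | zero =>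
          -- abelian case
          have : x ∈ Subgroup.closure S := by rw [htop]; trivial
          exact central_closure_piT
            (fun s _ => hAc s (by rw [Subgroup.lowerCentralSeries_zero]; trivial)) hS x this
      | succ c' =>
          set A := Subgroup.lowerCentralSeries (⊤ : Subgroup Γ) (c' + 1) with hA
          letI : A.Normal := by rw [hA]; infer_instance
          set mk : Γ →* Γ ⧸ A := QuotientGroup.mk' A with hmk
          have hmksurj : Function.Surjective mk := QuotientGroup.mk'_surjective A
          have hQc : Subgroup.lowerCentralSeries (⊤ : Subgroup (Γ ⧸ A)) (c' + 1) = ⊥ := by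
            rw [eq_bot_iff]
            refine le_trans (lcs_le_map_of_surjective mk hmksurj (c' + 1)) ?_
            rintro _ ⟨y, hy, rfl⟩
            rw [Subgroup.mem_bot, hmk]
            exact (QuotientGroup.eq_one_iff y).mpr hy
          have ihQ : ∀ q : Γ ⧸ A, PiT π q :=
            ih (Γ ⧸ A) _ hQc (mk '' S)
              (by rintro _ ⟨s, hs, rfl⟩; exact piT_map mk (hS s hs))
              (by rw [← MonoidHom.map_closure, htop]; exact Subgroup.map_top_of_surjective mk hmksurj)
          -- elements of A are π-torsion
          have hAt : ∀ a ∈ A, PiT π a := by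
            have hgen : ∀ w ∈ {g : Γ | ∃ g₁ ∈ Subgroup.lowerCentralSeries (⊤ : Subgroup Γ) c', ∃ g₂ ∈
                (⊤ : Subgroup Γ), ⁅g₁, g₂⁆ = g}, PiT π w := by
              rintro w ⟨u, hu, g, -, rfl⟩
              have hucc : ∀ y : Γ, ⁅u, y⁆ ∈ Subgroup.center Γ := by
                intro y
                apply hAc
                rw [hA, lcs_succ_eq]
                exact Subgroup.commutator_mem_commutator hu (Subgroup.mem_top y)
              have hq := ihQ (mk g)
              have hgm : g ^ orderOf (mk g) ∈ A := by
                have h1 : g ^ orderOf (mk g) ∈ MonoidHom.ker mk := by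
                  rw [MonoidHom.mem_ker, map_pow]; exact pow_orderOf_eq_one (mk g)
                rwa [hmk, QuotientGroup.ker_mk'] at h1
              have : ⁅u, g⁆ ^ orderOf (mk g) = 1 := by
                rw [← cc_pow hucc, commutatorElement_eq_one_iff_mul_comm]
                exact Subgroup.mem_center_iff.mp (hAc _ hgm) u
              exact piT_of_pow_eq_one hq.1 hq.2 this
            intro a ha
            rw [hA, lcs_succ_eq, Subgroup.commutator_def] at ha
            refine central_closure_piT ?_ hgen a ha
            rintro w ⟨u, hu, g, -, rfl⟩
            apply hAc
            rw [hA, lcs_succ_eq]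
            exact Subgroup.commutator_mem_commutator hu (Subgroup.mem_top g)
          -- conclude
          have hq := ihQ (mk x)
          have hxm : x ^ orderOf (mk x) ∈ A := by
            have h1 : x ^ orderOf (mk x) ∈ MonoidHom.ker mk := by
              rw [MonoidHom.mem_ker, map_pow]; exact pow_orderOf_eq_one (mk x)
            rwa [hmk, QuotientGroup.ker_mk'] at h1
          have ht := hAt _ hxm
          apply piT_of_pow_eq_one (m := orderOf (mk x) * orderOf (x ^ orderOf (mk x)))
            (mul_ne_zero hq.1 ht.1)
          · intro p hp hd
            rcases (Nat.Prime.dvd_mul hp).mp hd with h | h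
            · exact hq.2 p hp h
            · exact ht.2 p hp h
          · rw [pow_mul]; exact pow_orderOf_eq_one _

end Torsion
section LocallyNilpotentTorsion

variable {π : Finset ℕ}

lemma piT_subtype {Γ : Type u} [Group Γ] {M : Subgroup Γ} (x : ↥M) :
    PiT π x ↔ PiT π (x : Γ) := by
  unfold PiT
  rw [Subgroup.orderOf_coe]

/-- In a group all of whose finitely generated subgroups are nilpotent, the product of two
`π`-torsion elements is `π`-torsion. -/
lemma piT_mul_of_locallyNilpotent {Γ : Type u} [Group Γ]
    (hΓ : ∀ S : Subgroup Γ, S.FG → Group.IsNilpotent S) {a b : Γ}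
    (ha : PiT π a) (hb : PiT π b) : PiT π (a * b) := by
  set N : Subgroup Γ := Subgroup.closure {a, b} with hN
  have hNfg : N.FG := by
    rw [Subgroup.fg_iff]
    exact ⟨{a, b}, rfl, Set.toFinite _⟩
  have hnil : Group.IsNilpotent ↥N := hΓ N hNfg
  obtain ⟨c, hc⟩ := nilpotent_iff_lowerCentralSeries.mp hnil
  have haN : a ∈ N := Subgroup.subset_closure (by simp)
  have hbN : b ∈ N := Subgroup.subset_closure (by simp)
  have htop : Subgroup.closure (((↑) : ↥N → Γ) ⁻¹' {a, b}) = ⊤ :=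
    Subgroup.closure_closure_coe_preimage
  have hall : ∀ x : ↥N, PiT π x := by
    refine nilpotent_gen_piT c ↥N _ hc _ ?_ htop
    rintro s hs
    rw [piT_subtype]
    rcases hs with h | h
    · rw [h]; exact ha
    · rw [Set.mem_singleton_iff] at h; rw [h]; exact hb
  have := hall (⟨a, haN⟩ * ⟨b, hbN⟩)
  rwa [piT_subtype] at this

lemma piT_normalClosure {Γ : Type u} [Group Γ]
    (hΓ : ∀ S : Subgroup Γ, S.FG → Group.IsNilpotent S) {s : Set Γ}
    (hs : ∀ x ∈ s, PiT π x) :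
    ∀ k ∈ Subgroup.normalClosure s, PiT π k := by
  intro k hk
  have hk' : k ∈ Subgroup.closure (Group.conjugatesOfSet s) := hk
  clear hk
  induction hk' using Subgroup.closure_induction with
  | mem x hx =>
      obtain ⟨a, has, hconj⟩ := Group.mem_conjugatesOfSet_iff.mp hx
      obtain ⟨c, rfl⟩ := isConj_iff.mp hconj
      have he : orderOf (c * a * c⁻¹) = orderOf a := by
        have := orderOf_injective (MulAut.conj c).toMonoidHom (MulAut.conj c).injective a
        simpa [MulAut.conj_apply] using this
      have ha := hs a has
      exact ⟨by rw [he]; exact ha.1, by rw [he]; exact ha.2⟩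
  | one => exact piT_one
  | mul x y _ _ px py => exact piT_mul_of_locallyNilpotent hΓ px py
  | inv x _ px => exact px.inv

end LocallyNilpotentTorsion
section Engine

open Subgroup

variable {Γ : Type u} [Group Γ]

/-- The key step: if `K ∩ W ≤ Z(Γ)` then `K ∩ W' ≤ Z(Γ)`, where `[W', Γ] ≤ W`. -/
lemma engine_step {π : Finset ℕ} (hπ : ∀ p ∈ π, p.Prime) {n : ℕ} (hn : n = ∏ p ∈ π, p)
    {H K : Subgroup Γ} (hHK : H ≤ K) (hKn : K.Normal)
    (hKt : ∀ k ∈ K, PiT π k)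
    (hHle : H ≤ commutator Γ ⊔ Subgroup.closure {g : Γ | ∃ x : Γ, x ^ n = g})
    (hbasis : Subgroup.centralizer (H : Set Γ) = Subgroup.center Γ)
    {W W' : Subgroup Γ} (hW : ∀ x ∈ W', ∀ y : Γ, ⁅x, y⁆ ∈ W)
    (hIH : ∀ k ∈ K, k ∈ W → k ∈ Subgroup.center Γ) :
    ∀ k ∈ K, k ∈ W' → k ∈ Subgroup.center Γ := by
  have hn0 : n ≠ 0 := by
    rw [hn]
    have : 0 < ∏ p ∈ π, p := Finset.prod_pos fun p hp => (hπ p hp).pos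
    omega
  suffices main : ∀ m : ℕ, ∀ k, k ∈ K → k ∈ W' → orderOf k ≤ m → k ∈ Subgroup.center Γ by
    intro k hkK hkW'
    exact main (orderOf k) k hkK hkW' le_rfl
  intro m
  induction m with
  | zero =>
      intro k hkK _ hord
      exact absurd (Nat.le_zero.mp hord) (hKt k hkK).1
  | succ m ih =>
      intro k hkK hkW' hord
      -- all commutators with k are central
      have hcc : ∀ y : Γ, ⁅k, y⁆ ∈ Subgroup.center Γ := by
        intro y
        apply hIH _ _ (hW k hkW' y)
        have he : ⁅k, y⁆ = k * (y * k⁻¹ * y⁻¹) := by rw [commutatorElement_def]; group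
        rw [he]
        exact mul_mem hkK (hKn.conj_mem _ (inv_mem hkK) y)
      rcases Nat.lt_or_ge 1 (orderOf k) with h1 | h1
      · -- orderOf k ≥ 2
        obtain ⟨p, hp, hpd⟩ := Nat.exists_prime_and_dvd (by omega : orderOf k ≠ 1)
        have hpπ : p ∈ π := (hKt k hkK).2 p hp hpd
        have hpn : p ∣ n := hn ▸ Finset.dvd_prod_of_mem _ hpπ
        have hgcd : 1 < Nat.gcd (orderOf k) n :=
          lt_of_lt_of_le hp.one_lt (Nat.le_of_dvd
            (Nat.gcd_pos_of_pos_left n (by omega)) (Nat.dvd_gcd hpd hpn))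
        have hlt : orderOf (k ^ n) < orderOf k := by
          rw [orderOf_pow' k hn0]
          exact Nat.div_lt_self (by omega) hgcd
        have hknc : k ^ n ∈ Subgroup.center Γ :=
          ih (k ^ n) (pow_mem hkK n) (pow_mem hkW' n) (by omega)
        -- the subgroup of elements commuting with k
        set C : Subgroup Γ :=
          { carrier := {y : Γ | ⁅k, y⁆ = 1}
            one_mem' := commutatorElement_one_right k
            mul_mem' := fun {a b} ha hb => by
              show ⁅k, a * b⁆ = 1
              rw [cc_mul hcc, ha, hb, one_mul]
            inv_mem' := fun {a} ha => by
              show ⁅k, a⁻¹⁆ = 1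
              rw [cc_inv hcc, ha, inv_one] } with hC
        have hHC : H ≤ C := by
          refine le_trans hHle (sup_le ?_ ?_)
          · show ⁅(⊤ : Subgroup Γ), (⊤ : Subgroup Γ)⁆ ≤ C
            rw [Subgroup.commutator_le]
            intro g₁ _ g₂ _
            exact cc_commutator hcc g₁ g₂
          · rw [Subgroup.closure_le]
            rintro g ⟨x, rfl⟩
            show ⁅k, x ^ n⁆ = 1
            rw [cc_pow hcc, ← cc_pow_left hcc, commutatorElement_eq_one_iff_mul_comm]
            exact (Subgroup.mem_center_iff.mp hknc x).symm
        have : k ∈ Subgroup.centralizer (H : Set Γ) := by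
          rw [Subgroup.mem_centralizer_iff]
          intro h hh
          have : ⁅k, h⁆ = 1 := hHC hh
          rw [commutatorElement_eq_one_iff_mul_comm] at this
          exact this.symm
        rwa [hbasis] at this
      · -- orderOf k ≤ 1, so k = 1
        have : orderOf k = 1 := by
          have := (hKt k hkK).1
          omega
        rw [orderOf_eq_one_iff.mp this]
        exact one_mem _

lemma engine_nat {π : Finset ℕ} (hπ : ∀ p ∈ π, p.Prime) {n : ℕ} (hn : n = ∏ p ∈ π, p)
    {H K : Subgroup Γ} (hHK : H ≤ K) (hKn : K.Normal)
    (hKt : ∀ k ∈ K, PiT π k)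
    (hHle : H ≤ commutator Γ ⊔ Subgroup.closure {g : Γ | ∃ x : Γ, x ^ n = g})
    (hbasis : Subgroup.centralizer (H : Set Γ) = Subgroup.center Γ) :
    ∀ i : ℕ, ∀ k ∈ K, k ∈ Subgroup.upperCentralSeries Γ i → k ∈ Subgroup.center Γ := by
  intro i
  induction i with
  | zero =>
      intro k _ hk
      rw [Subgroup.upperCentralSeries_zero, Subgroup.mem_bot] at hk
      rw [hk]; exact one_mem _
  | succ i ih =>
      refine engine_step hπ hn hHK hKn hKt hHle hbasis ?_ ih
      intro x hx y
      have := Subgroup.mem_upperCentralSeries_succ_iff.mp hx y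
      exact this

end Engine
section Transfinite

open Subgroup

variable {G : Type u} [Group G]

lemma tucs_zero : transUpperCentralSeries G 0 = ⊥ := by
  unfold transUpperCentralSeries transUpperCentralSeriesAux
  rw [Ordinal.limitRecOn_zero]

lemma tucs_normal (o : Ordinal.{u}) : (transUpperCentralSeries G o).Normal :=
  (transUpperCentralSeriesAux G o).2

lemma tucs_succ (o : Ordinal.{u}) :
    transUpperCentralSeries G (Order.succ o) =
      @Subgroup.upperCentralSeriesStep G _ (transUpperCentralSeries G o)
        (transUpperCentralSeriesAux G o).2 := by
  unfold transUpperCentralSeries transUpperCentralSeriesAux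
  rw [Ordinal.limitRecOn_succ]

lemma tucs_limit {o : Ordinal.{u}} (ho : Order.IsSuccLimit o) :
    transUpperCentralSeries G o =
      ⨆ (o' : Ordinal.{u}) (_ : o' < o), transUpperCentralSeries G o' := by
  unfold transUpperCentralSeries transUpperCentralSeriesAux
  rw [Ordinal.limitRecOn_limit _ _ _ _ ho]

lemma mem_tucs_succ {o : Ordinal.{u}} {x : G} :
    x ∈ transUpperCentralSeries G (Order.succ o) ↔
      ∀ y : G, x * y * x⁻¹ * y⁻¹ ∈ transUpperCentralSeries G o := by
  rw [tucs_succ]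
  exact Iff.rfl

lemma tucs_le_succ (o : Ordinal.{u}) :
    transUpperCentralSeries G o ≤ transUpperCentralSeries G (Order.succ o) := by
  intro x hx
  rw [mem_tucs_succ]
  intro y
  have he : x * y * x⁻¹ * y⁻¹ = x * (y * x⁻¹ * y⁻¹) := by group
  rw [he]
  exact mul_mem hx ((tucs_normal o).conj_mem _ (inv_mem hx) y)

lemma tucs_mono : ∀ o o' : Ordinal.{u}, o' ≤ o →
    transUpperCentralSeries G o' ≤ transUpperCentralSeries G o := by
  intro o
  induction o using Ordinal.induction with
  | h o IH =>
    intro o' h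
    rcases eq_or_lt_of_le h with rfl | h'
    · exact le_rfl
    rcases Ordinal.zero_or_succ_or_isSuccLimit o with rfl | ⟨a, rfl⟩ | hlim
    · exact absurd h' (not_lt_of_ge (zero_le (a := o')))
    · exact le_trans (IH a (Order.lt_succ a) o' (Order.lt_succ_iff.mp h')) (tucs_le_succ a)
    · rw [tucs_limit hlim]
      exact le_iSup_of_le o' (le_iSup_of_le h' le_rfl)

lemma engine_ord {π : Finset ℕ} (hπ : ∀ p ∈ π, p.Prime) {n : ℕ} (hn : n = ∏ p ∈ π, p)
    {H K : Subgroup G} (hHK : H ≤ K) (hKn : K.Normal)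
    (hKt : ∀ k ∈ K, PiT π k)
    (hHle : H ≤ commutator G ⊔ Subgroup.closure {g : G | ∃ x : G, x ^ n = g})
    (hbasis : Subgroup.centralizer (H : Set G) = Subgroup.center G) :
    ∀ o : Ordinal.{u}, ∀ k ∈ K, k ∈ transUpperCentralSeries G o →
      k ∈ Subgroup.center G := by
  intro o
  induction o using Ordinal.induction with
  | h o IH =>
    rcases Ordinal.zero_or_succ_or_isSuccLimit o with rfl | ⟨a, rfl⟩ | hlim
    · intro k _ hk
      rw [tucs_zero, Subgroup.mem_bot] at hk
      rw [hk]; exact one_mem _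
    · refine engine_step hπ hn hHK hKn hKt hHle hbasis ?_ (IH a (Order.lt_succ a))
      intro x hx y
      have := mem_tucs_succ.mp hx y
      rwa [← commutatorElement_def] at this
    · intro k hkK hk
      rw [tucs_limit hlim] at hk
      have hdir : Directed (· ≤ ·)
          (fun o' : Ordinal.{u} => ⨆ _ : o' < o, transUpperCentralSeries G o') := by
        intro o1 o2
        by_cases h1 : o1 < o
        · by_cases h2 : o2 < o
          · refine ⟨max o1 o2, ?_, ?_⟩
            · simp only [iSup_pos h1, iSup_pos (max_lt h1 h2)]
              exact tucs_mono _ _ (le_max_left _ _)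
            · simp only [iSup_pos h2, iSup_pos (max_lt h1 h2)]
              exact tucs_mono _ _ (le_max_right _ _)
          · exact ⟨o1, le_rfl, by simp only [iSup_neg h2]; exact bot_le⟩
        · exact ⟨o2, by simp only [iSup_neg h1]; exact bot_le, le_rfl⟩
      obtain ⟨o', ho'⟩ := (Subgroup.mem_iSup_of_directed hdir).mp hk
      by_cases h : o' < o
      · simp only [iSup_pos h] at ho'
        exact IH o' h k hkK ho'
      · simp only [iSup_neg h, Subgroup.mem_bot] at ho'
        rw [ho']; exact one_mem _

end Transfinite
section Witness

open Subgroup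

variable {G : Type u} [Group G]

lemma exists_witness (n : ℕ) :
    ∀ h ∈ Subgroup.closure (commutatorSet G ∪ {g : G | ∃ x : G, x ^ n = g}),
      ∃ F : Finset G, ∀ M : Subgroup G, ↑F ⊆ (M : Set G) →
        ∃ hM : h ∈ M, (⟨h, hM⟩ : ↥M) ∈
          commutator ↥M ⊔ Subgroup.closure {g : ↥M | ∃ x : ↥M, x ^ n = g} := by
  classical
  intro h hh
  induction hh using Subgroup.closure_induction with
  | mem x hx =>
      rcases hx with ⟨a, b, rfl⟩ | ⟨x, rfl⟩
      · refine ⟨{a, b}, ?_⟩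
        intro M hFM
        have haM : a ∈ M := hFM (by simp)
        have hbM : b ∈ M := hFM (by simp)
        have hM : ⁅a, b⁆ ∈ M := by
          rw [commutatorElement_def]
          exact mul_mem (mul_mem (mul_mem haM hbM) (inv_mem haM)) (inv_mem hbM)
        refine ⟨hM, ?_⟩
        have he : (⟨⁅a, b⁆, hM⟩ : ↥M) = ⁅(⟨a, haM⟩ : ↥M), (⟨b, hbM⟩ : ↥M)⁆ := by
          apply Subtype.ext
          simp [commutatorElement_def]
        rw [he]
        exact Subgroup.mem_sup_left
          (Subgroup.commutator_mem_commutator (Subgroup.mem_top _) (Subgroup.mem_top _))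
      · refine ⟨{x}, ?_⟩
        intro M hFM
        have hxM : x ∈ M := hFM (by simp)
        refine ⟨pow_mem hxM n, ?_⟩
        have he : (⟨x ^ n, pow_mem hxM n⟩ : ↥M) = (⟨x, hxM⟩ : ↥M) ^ n := by
          apply Subtype.ext
          simp
        rw [he]
        exact Subgroup.mem_sup_right (Subgroup.subset_closure ⟨⟨x, hxM⟩, rfl⟩)
  | one =>
      refine ⟨∅, fun M _ => ⟨one_mem M, ?_⟩⟩
      have he : (⟨(1 : G), one_mem M⟩ : ↥M) = 1 := rfl
      rw [he]
      exact one_mem _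
  | mul x y _ _ px py =>
      obtain ⟨Fx, hFx⟩ := px
      obtain ⟨Fy, hFy⟩ := py
      refine ⟨Fx ∪ Fy, ?_⟩
      intro M hFM
      rw [Finset.coe_union, Set.union_subset_iff] at hFM
      obtain ⟨hxM, hx'⟩ := hFx M hFM.1
      obtain ⟨hyM, hy'⟩ := hFy M hFM.2
      refine ⟨mul_mem hxM hyM, ?_⟩
      have he : (⟨x * y, mul_mem hxM hyM⟩ : ↥M) = (⟨x, hxM⟩ : ↥M) * (⟨y, hyM⟩ : ↥M) := rfl
      rw [he]
      exact mul_mem hx' hy'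
  | inv x _ px =>
      obtain ⟨Fx, hFx⟩ := px
      refine ⟨Fx, ?_⟩
      intro M hFM
      obtain ⟨hxM, hx'⟩ := hFx M hFM
      refine ⟨inv_mem hxM, ?_⟩
      have he : (⟨x⁻¹, inv_mem hxM⟩ : ↥M) = (⟨x, hxM⟩ : ↥M)⁻¹ := rfl
      rw [he]
      exact inv_mem hx'

end Witness

/-- Let `G` be a locally nilpotent group, `π` a finite set of primes and `n` the product
of the primes in `π`.  Assume that a `π`-subgroup `H` of `G'Gⁿ` is an Inn-basis of `G`.
If either `G` is hypercentral or `H` is finite, then `G` is abelian. -/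
theorem abelian_of_pi_subgroup_innBasis {G : Type u} [Group G]
    (hG : IsLocallyNilpotent G)
    (π : Finset ℕ) (hπ : ∀ p ∈ π, p.Prime) (n : ℕ) (hn : n = ∏ p ∈ π, p)
    (H : Subgroup G)
    (hHle : H ≤ commutator G ⊔ Subgroup.closure {g : G | ∃ x : G, x ^ n = g})
    (hHpi : ∀ h ∈ H, IsOfFinOrder h ∧ ∀ p : ℕ, p.Prime → p ∣ orderOf h → p ∈ π)
    (hbasis : Subgroup.centralizer (H : Set G) = Subgroup.center G)
    (hcase : IsHypercentral G ∨ Finite H) :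
    ∀ a b : G, a * b = b * a := by
  have hHpi' : ∀ h ∈ H, PiT π h := fun h hh =>
    ⟨(hHpi h hh).1.orderOf_pos.ne', (hHpi h hh).2⟩
  suffices hcent : H ≤ Subgroup.center G by
    have hall : ∀ g : G, g ∈ Subgroup.center G := by
      intro g
      have hmem : g ∈ Subgroup.centralizer (H : Set G) := by
        rw [Subgroup.mem_centralizer_iff]
        intro h hh
        exact (Subgroup.mem_center_iff.mp (hcent hh) g).symm
      rwa [hbasis] at hmem
    intro a b
    exact Subgroup.mem_center_iff.mp (hall b) a
  rcases hcase with hhyp | hfin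
  · -- hypercentral case
    have hKn : (Subgroup.normalClosure (H : Set G)).Normal := Subgroup.normalClosure_normal
    have hKt : ∀ k ∈ Subgroup.normalClosure (H : Set G), PiT π k :=
      piT_normalClosure hG (fun x hx => hHpi' x hx)
    have hHK : H ≤ Subgroup.normalClosure (H : Set G) :=
      fun h hh => Subgroup.subset_normalClosure hh
    intro h hh
    have hhtop : h ∈ hypercenter G := by rw [hhyp]; trivial
    have hdir : Directed (· ≤ ·) (transUpperCentralSeries G) := fun o1 o2 =>
      ⟨max o1 o2, tucs_mono _ _ (le_max_left _ _), tucs_mono _ _ (le_max_right _ _)⟩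
    obtain ⟨o, ho⟩ := (Subgroup.mem_iSup_of_directed hdir).mp hhtop
    exact engine_ord hπ hn hHK hKn hKt hHle hbasis o h (hHK hh) ho
  · -- finite case
    have hBset : commutator G ⊔ Subgroup.closure {g : G | ∃ x : G, x ^ n = g}
        = Subgroup.closure (commutatorSet G ∪ {g : G | ∃ x : G, x ^ n = g}) := by
      rw [Subgroup.closure_union, ← commutator_eq_closure]
    have hwit : ∀ h ∈ H, ∃ F : Finset G, ∀ M : Subgroup G, ↑F ⊆ (M : Set G) →
        ∃ hM : h ∈ M, (⟨h, hM⟩ : ↥M) ∈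
          commutator ↥M ⊔ Subgroup.closure {g : ↥M | ∃ x : ↥M, x ^ n = g} := by
      intro h hh
      refine exists_witness n h ?_
      rw [← hBset]
      exact hHle hh
    choose F hF using hwit
    haveI : Finite ↥H := hfin
    have hHsetfin : (H : Set G).Finite := Set.finite_coe_iff.mp (by exact hfin)
    set T : Set G := (H : Set G) ∪ ⋃ (x : ↥H), ↑(F x.1 x.2) with hT
    have hTfin : T.Finite :=
      Set.Finite.union hHsetfin (Set.finite_iUnion fun x => (F x.1 x.2).finite_toSet)
    set M : Subgroup G := Subgroup.closure T with hM
    have hMfg : M.FG := by rw [Subgroup.fg_iff]; exact ⟨T, rfl, hTfin⟩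
    haveI hMnil : Group.IsNilpotent ↥M := hG M hMfg
    have hHM : H ≤ M := fun h hh => Subgroup.subset_closure (Or.inl hh)
    have hHMle : H.subgroupOf M ≤
        commutator ↥M ⊔ Subgroup.closure {g : ↥M | ∃ x : ↥M, x ^ n = g} := by
      rintro ⟨x, hxM⟩ hx
      rw [Subgroup.mem_subgroupOf] at hx
      have hsub : ↑(F x hx) ⊆ (M : Set G) := by
        intro a ha
        apply Subgroup.subset_closure
        exact Or.inr (Set.mem_iUnion.mpr ⟨⟨x, hx⟩, ha⟩)
      obtain ⟨hM', hmem⟩ := hF x hx M hsub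
      exact hmem
    have hbasisM : Subgroup.centralizer ((H.subgroupOf M : Subgroup ↥M) : Set ↥M)
        = Subgroup.center ↥M := by
      ext z
      constructor
      · intro hz
        have hzG : (z : G) ∈ Subgroup.centralizer (H : Set G) := by
          rw [Subgroup.mem_centralizer_iff]
          intro h hh
          have h1 : (⟨h, hHM hh⟩ : ↥M) ∈ H.subgroupOf M := by
            rw [Subgroup.mem_subgroupOf]; exact hh
          have h2 := Subgroup.mem_centralizer_iff.mp hz _ h1
          exact congrArg Subtype.val h2
        rw [hbasis] at hzG
        rw [Subgroup.mem_center_iff]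
        intro g
        apply Subtype.ext
        exact Subgroup.mem_center_iff.mp hzG (g : G)
      · intro hz
        rw [Subgroup.mem_centralizer_iff]
        intro h _
        exact Subgroup.mem_center_iff.mp hz h
    have hKMn : (Subgroup.normalClosure ((H.subgroupOf M : Subgroup ↥M) : Set ↥M)).Normal :=
      Subgroup.normalClosure_normal
    have hKMt : ∀ k ∈ Subgroup.normalClosure ((H.subgroupOf M : Subgroup ↥M) : Set ↥M),
        PiT π k := by
      apply piT_normalClosure (fun S _ => inferInstance)
      intro x hx
      rw [piT_subtype]
      exact hHpi' _ (Subgroup.mem_subgroupOf.mp hx)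
    obtain ⟨d, hd⟩ := hMnil.nilpotent'
    have hHMcent : ∀ h ∈ H.subgroupOf M, h ∈ Subgroup.center ↥M := by
      intro h hh
      exact engine_nat hπ hn (fun _ hx => Subgroup.subset_normalClosure hx) hKMn hKMt
        hHMle hbasisM d h (Subgroup.subset_normalClosure hh) (by rw [hd]; trivial)
    have hMcent : ∀ x ∈ M, x ∈ Subgroup.center G := by
      intro x hx
      have hmem : x ∈ Subgroup.centralizer (H : Set G) := by
        rw [Subgroup.mem_centralizer_iff]
        intro h hh
        have h1 : (⟨h, hHM hh⟩ : ↥M) ∈ H.subgroupOf M := by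
          rw [Subgroup.mem_subgroupOf]; exact hh
        have h2 := Subgroup.mem_center_iff.mp (hHMcent _ h1) ⟨x, hx⟩
        exact (congrArg Subtype.val h2).symm
      rwa [hbasis] at hmem
    intro h hh
    exact hMcent h (hHM hh)
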